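/- Let Γ ⊆ [0,1]. Then D(D(Γ)) = D(Γ) ∪ {1}, where D(Γ) := { a ≤ 1 | a = (m-1+f)/m for some positive integer m and f ∈ Γ₊ }, and Γ₊ := {0} ∪ { finite sums of elements of Γ that are ≤ 1 }. -/

import Mathlib

open scoped BigOperators

/-- `Γ₊`: {0} together with all finite sums of elements of `Γ` which are at most 1. -/
def plusSet (Γ : Set ℝ) : Set ℝ :=
  insert 0 {x | ∃ (l : ℕ) (f : Fin l → ℝ), 0 < l ∧ (∀ p, f p ∈ Γ) ∧ x = ∑ p, f p ∧ x ≤ 1}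

/-- `D(Γ) := { a ≤ 1 | a = (m-1+f)/m, m ∈ ℤ_{>0}, f ∈ Γ₊ }`. -/
def DSet (Γ : Set ℝ) : Set ℝ :=
  {a | a ≤ 1 ∧ ∃ (m : ℕ) (f : ℝ), 0 < m ∧ f ∈ plusSet Γ ∧ a = ((m : ℝ) - 1 + f) / m}

lemma plus_nonneg {Γ : Set ℝ} (hΓ : Γ ⊆ Set.Icc (0 : ℝ) 1) {x : ℝ}
    (hx : x ∈ plusSet Γ) : 0 ≤ x := by
  rcases hx with rfl | ⟨l, f, hl, hf, rfl, hle⟩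
  · exact le_refl 0
  · exact Finset.sum_nonneg fun p _ => (hΓ (hf p)).1

lemma D_nonneg {Γ : Set ℝ} (hΓ : Γ ⊆ Set.Icc (0 : ℝ) 1) {x : ℝ}
    (hx : x ∈ DSet Γ) : 0 ≤ x := by
  obtain ⟨hle, m, f, hm, hf, rfl⟩ := hx
  have h0 := plus_nonneg hΓ hf
  have h1 : (1 : ℝ) ≤ m := by exact_mod_cast hm
  apply div_nonneg _ (by linarith)
  linarith

lemma plus_add {Γ : Set ℝ} {x y : ℝ} (hx : x ∈ plusSet Γ) (hy : y ∈ plusSet Γ)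
    (hxy : x + y ≤ 1) : x + y ∈ plusSet Γ := by
  rcases hx with rfl | ⟨k, f, hk, hf, rfl, hxle⟩
  · simpa using hy
  rcases hy with rfl | ⟨l, g, hl, hg, rfl, hyle⟩
  · right; exact ⟨k, f, hk, hf, by simp, by simpa using hxy⟩
  · right
    refine ⟨k + l, Fin.append f g, by omega, ?_, ?_, hxy⟩
    · intro p
      refine Fin.addCases (fun i => ?_) (fun i => ?_) p
      · rw [Fin.append_left]; exact hf i
      · rw [Fin.append_right]; exact hg i
    · rw [Fin.sum_univ_add]
      simp [Fin.append_left, Fin.append_right]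

lemma plus_sum {Γ : Set ℝ} (hΓ : Γ ⊆ Set.Icc (0 : ℝ) 1) {ι : Type*} [DecidableEq ι]
    (t : Finset ι) (f : ι → ℝ) (hf : ∀ i ∈ t, f i ∈ plusSet Γ)
    (hle : ∑ i ∈ t, f i ≤ 1) : ∑ i ∈ t, f i ∈ plusSet Γ := by
  induction t using Finset.induction_on with
  | empty => simp [plusSet]
  | @insert a s hnot ih =>
    rw [Finset.sum_insert hnot] at hle ⊢
    have ha := hf a (Finset.mem_insert_self a s)
    have hrest : ∀ i ∈ s, f i ∈ plusSet Γ := fun i hi => hf i (Finset.mem_insert_of_mem hi)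
    have hsle : ∑ i ∈ s, f i ≤ 1 := by
      have := plus_nonneg hΓ ha; linarith
    exact plus_add ha (ih hrest hsle) hle

theorem stmt_2 (Γ : Set ℝ) (hΓ : Γ ⊆ Set.Icc (0 : ℝ) 1) :
    DSet (DSet Γ) = DSet Γ ∪ {1} := by
  have hD01 : DSet Γ ⊆ Set.Icc (0 : ℝ) 1 := fun x hx => ⟨D_nonneg hΓ hx, hx.1⟩
  apply Set.Subset.antisymm
  · -- hard direction
    rintro a ⟨hale, m, g, hm, hg, rfl⟩
    have hm1 : (1 : ℝ) ≤ m := by exact_mod_cast hm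
    have hmpos : (0 : ℝ) < m := by linarith
    rcases hg with rfl | ⟨l, av, hl, hav, rfl, hgle⟩
    · -- g = 0
      exact Or.inl ⟨hale, m, 0, hm, Set.mem_insert _ _, rfl⟩
    · set g := ∑ p, av p with hgdef
      by_cases hg1 : g = 1
      · right
        have : ((m : ℝ) - 1 + g) / m = 1 := by rw [hg1]; field_simp; ring
        simp [this]
      -- g < 1
      have hglt : g < 1 := lt_of_le_of_ne hgle hg1
      choose mf fv hmf hfv heq using fun p => (hav p).2
      have hanneg : ∀ p, 0 ≤ av p := fun p => D_nonneg hΓ (hav p)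
      have hhalf : ∀ p, 2 ≤ mf p → 1 / 2 ≤ av p := by
        intro p hp
        have h2 : (2 : ℝ) ≤ mf p := by exact_mod_cast hp
        have hf0 := plus_nonneg hΓ (hfv p)
        rw [heq p, le_div_iff₀ (by linarith)]
        linarith
      -- choose a distinguished index p₀
      obtain ⟨p₀, hp₀⟩ : ∃ p₀ : Fin l, ∀ q, q ≠ p₀ → mf q = 1 := by
        by_cases hex : ∃ p, 2 ≤ mf p
        · obtain ⟨p₀, hp₀⟩ := hex
          refine ⟨p₀, fun q hq => ?_⟩
          by_contra hq1
          have hq2 : 2 ≤ mf q := by have := hmf q; omega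
          have hsum : av p₀ + av q ≤ g := by
            have hsub : ({p₀, q} : Finset (Fin l)) ⊆ Finset.univ := Finset.subset_univ _
            have := Finset.sum_le_sum_of_subset_of_nonneg hsub
              (fun i _ _ => hanneg i)
            rwa [Finset.sum_pair (Ne.symm hq)] at this
          have := hhalf p₀ hp₀
          have := hhalf q hq2
          linarith
        · push_neg at hex
          exact ⟨⟨0, hl⟩, fun q _ => by have := hmf q; have := hex q; omega⟩
      -- all other terms are in plusSet Γ
      have hother : ∀ q ∈ Finset.univ.erase p₀, av q ∈ plusSet Γ := by
        intro q hq
        have hq1 := hp₀ q (Finset.mem_erase.1 hq).1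
        have := heq q
        rw [hq1] at this
        simp at this
        rw [this]; exact hfv q
      set s := ∑ q ∈ Finset.univ.erase p₀, av q with hsdef
      have hsplit : av p₀ + s = g := Finset.add_sum_erase _ _ (Finset.mem_univ p₀)
      have hsmem : s ∈ plusSet Γ := by
        apply plus_sum hΓ _ _ hother
        have := hanneg p₀; linarith
      set n := mf p₀ with hndef
      have hn1 : (1 : ℝ) ≤ n := by exact_mod_cast hmf p₀
      have hnpos : (0 : ℝ) < n := by linarith
      -- the key algebraic identity
      have hkey : ((m : ℝ) - 1 + g) / m
          = ((↑(m * n) : ℝ) - 1 + (fv p₀ + n * s)) / ↑(m * n) := by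
        have : g = ((n : ℝ) - 1 + fv p₀) / n + s := by
          rw [← hsplit, heq p₀]
        rw [this]
        push_cast
        field_simp
        ring
      left
      refine ⟨hale, m * n, fv p₀ + n * s, Nat.mul_pos hm (hmf p₀), ?_, hkey⟩
      have hFle : fv p₀ + n * s ≤ 1 := by
        rw [hkey] at hale
        have hMpos : (0 : ℝ) < ↑(m * n) := by exact_mod_cast Nat.mul_pos hm (hmf p₀)
        rw [div_le_one hMpos] at hale
        linarith
      -- fv p₀ + n * s ∈ plusSet Γ
      have hsum : ∑ i : Fin (n + 1), (Fin.cons (fv p₀) (fun _ => s) : Fin (n+1) → ℝ) i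
          = fv p₀ + n * s := by
        rw [Fin.sum_cons]
        simp [Finset.sum_const, nsmul_eq_mul]
      rw [← hsum]
      apply plus_sum hΓ
      · intro i _
        refine Fin.cases ?_ (fun j => ?_) i
        · exact hfv p₀
        · simpa using hsmem
      · rw [hsum]; exact hFle
  · -- easy direction
    rintro a (ha | ha)
    · refine ⟨ha.1, 1, a, one_pos, ?_, by norm_num⟩
      right
      exact ⟨1, fun _ => a, one_pos, fun _ => ha, by simp, ha.1⟩
    · rw [Set.mem_singleton_iff] at ha
      subst ha
      have hhalf : (1 / 2 : ℝ) ∈ DSet Γ := by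
        refine ⟨by norm_num, 2, 0, by norm_num, Set.mem_insert _ _, by norm_num⟩
      refine ⟨le_refl 1, 1, 1, one_pos, ?_, by norm_num⟩
      right
      refine ⟨2, fun _ => (1/2 : ℝ), by norm_num, fun _ => hhalf, by norm_num, le_refl 1⟩
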